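/- For all real x > 0, the trigamma function satisfies 1/x − 1/(2x²) + 1/(6x³) − 1/(30x⁵) + 1/(42x⁷) − 1/(30x⁹) < ψ'(x+1) < 1/x − 1/(2x²) + 1/(6x³) − 1/(30x⁵) + 1/(42x⁷). -/

import Mathlib

open Real Filter Topology

noncomputable def digamma (x : ℝ) : ℝ := deriv (fun t : ℝ => Real.log (Real.Gamma t)) x

noncomputable def trigamma (x : ℝ) : ℝ := ∑' n : ℕ, 1 / (x + n) ^ 2

noncomputable def Ub (x : ℝ) : ℝ := 1/x - 1/(2*x^2) + 1/(6*x^3) - 1/(30*x^5) + 1/(42*x^7)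
noncomputable def Vb (x : ℝ) : ℝ := 1/(30*x^9)

lemma keyA {y : ℝ} (hy : 0 < y) : 1/(y+1)^2 < Ub y - Ub (y+1) := by
  have h1 : (0:ℝ) < y + 1 := by linarith
  have h : Ub y - Ub (y+1) - 1/(y+1)^2
      = (5*y^2 + 45*y^3 + 173*y^4 + 357*y^5 + 413*y^6 + 252*y^7 + 63*y^8)
        / (210*y^9*(y+1)^9) := by
    unfold Ub
    field_simp
    ring
  have hpos : 0 < (5*y^2 + 45*y^3 + 173*y^4 + 357*y^5 + 413*y^6 + 252*y^7 + 63*y^8)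
      / (210*y^9*(y+1)^9) := by positivity
  linarith

lemma keyB {y : ℝ} (hy : 0 < y) :
    (Ub y - Vb y) - (Ub (y+1) - Vb (y+1)) < 1/(y+1)^2 := by
  have h1 : (0:ℝ) < y + 1 := by linarith
  have h : 1/(y+1)^2 - ((Ub y - Vb y) - (Ub (y+1) - Vb (y+1)))
      = (7 + 63*y + 247*y^2 + 543*y^3 + 709*y^4 + 525*y^5 + 175*y^6)
        / (210*y^9*(y+1)^9) := by
    unfold Ub Vb
    field_simp
    ring
  have hpos : 0 < (7 + 63*y + 247*y^2 + 543*y^3 + 709*y^4 + 525*y^5 + 175*y^6)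
      / (210*y^9*(y+1)^9) := by positivity
  linarith

lemma telescope {f : ℕ → ℝ} (h0 : ∀ n, 0 ≤ f n - f (n+1))
    (hlim : Tendsto f atTop (𝓝 0)) :
    HasSum (fun n => f n - f (n+1)) (f 0) := by
  rw [hasSum_iff_tendsto_nat_of_nonneg h0]
  have : Tendsto (fun n : ℕ => f 0 - f n) atTop (𝓝 (f 0 - 0)) :=
    tendsto_const_nhds.sub hlim
  simpa [Finset.sum_range_sub' f] using this

lemma Ub_tendsto : Tendsto Ub atTop (𝓝 0) := by
  have hc : Continuous (fun t : ℝ => t - t^2/2 + t^3/6 - t^5/30 + t^7/42) := by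
    continuity
  have h := (hc.tendsto 0).comp tendsto_inv_atTop_zero
  norm_num at h
  refine h.congr' ?_
  filter_upwards [eventually_gt_atTop (0:ℝ)] with y hy
  unfold Ub
  have : y ≠ 0 := ne_of_gt hy
  simp only [Function.comp_apply]
  field_simp

lemma Vb_tendsto : Tendsto Vb atTop (𝓝 0) := by
  have hc : Continuous (fun t : ℝ => t^9/30) := by continuity
  have h := (hc.tendsto 0).comp tendsto_inv_atTop_zero
  norm_num at h
  refine h.congr' ?_
  filter_upwards [eventually_gt_atTop (0:ℝ)] with y hy
  unfold Vb
  have : y ≠ 0 := ne_of_gt hy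
  simp only [Function.comp_apply]
  field_simp

theorem stmt_10 (x : ℝ) (hx : 0 < x) :
    1/x - 1/(2*x^2) + 1/(6*x^3) - 1/(30*x^5) + 1/(42*x^7) - 1/(30*x^9) < trigamma (x + 1) ∧
    trigamma (x + 1) < 1/x - 1/(2*x^2) + 1/(6*x^3) - 1/(30*x^5) + 1/(42*x^7) := by
  have hxn : ∀ n : ℕ, 0 < x + n := fun n => by positivity
  have hcast : ∀ n : ℕ, x + (↑(n+1) : ℝ) = (x + n) + 1 := by
    intro n; push_cast; ring
  have hcast2 : ∀ n : ℕ, (x + 1) + (n:ℝ) = (x + n) + 1 := by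
    intro n; ring
  have htop : Tendsto (fun n : ℕ => x + (n:ℝ)) atTop atTop :=
    tendsto_atTop_add_const_left _ x tendsto_natCast_atTop_atTop
  -- nonnegativity of Ub differences
  have hgpos : ∀ n : ℕ, 1/((x+1)+n)^2 < Ub (x+n) - Ub (x+(n:ℝ)+1) := by
    intro n
    have := keyA (hxn n)
    rw [hcast2 n]
    linarith
  have hg0 : ∀ n : ℕ, 0 ≤ (fun n : ℕ => Ub (x+n)) n - (fun n : ℕ => Ub (x+n)) (n+1) := by
    intro n
    simp only
    rw [hcast n]
    have := keyA (hxn n)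
    have hp : 0 < 1/((x+n)+1)^2 := by positivity
    linarith
  have hgHS : HasSum (fun n : ℕ => Ub (x+n) - Ub (x+(↑(n+1):ℝ))) (Ub x) := by
    have := telescope hg0 (Ub_tendsto.comp htop)
    simpa using this
  have hgHS' : HasSum (fun n : ℕ => Ub (x+n) - Ub ((x+n)+1)) (Ub x) := by
    refine hgHS.congr_fun ?_
    intro n; rw [hcast n]
  -- Vb telescoping
  have hv0 : ∀ n : ℕ, 0 ≤ (fun n : ℕ => Vb (x+n)) n - (fun n : ℕ => Vb (x+n)) (n+1) := by
    intro n
    simp only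
    rw [hcast n]
    have h1 : 0 < x + n := hxn n
    have : Vb ((x+n)+1) ≤ Vb (x+n) := by
      unfold Vb
      apply one_div_le_one_div_of_le
      · positivity
      · have hp : (x+n)^9 ≤ ((x+n)+1)^9 :=
          pow_le_pow_left₀ h1.le (by linarith) 9
        linarith
    linarith
  have hvHS : HasSum (fun n : ℕ => Vb (x+n) - Vb (x+(↑(n+1):ℝ))) (Vb x) := by
    have := telescope hv0 (Vb_tendsto.comp htop)
    simpa using this
  have hvHS' : HasSum (fun n : ℕ => Vb (x+n) - Vb ((x+n)+1)) (Vb x) := by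
    refine hvHS.congr_fun ?_
    intro n; rw [hcast n]
  -- summability of trigamma series via comparison
  have hf_nonneg : ∀ n : ℕ, 0 ≤ 1/((x+1)+(n:ℝ))^2 := by
    intro n; positivity
  have hf_le : ∀ n : ℕ, 1/((x+1)+(n:ℝ))^2 ≤ Ub (x+n) - Ub ((x+n)+1) := by
    intro n
    have := hgpos n
    linarith
  have hf_sum : Summable (fun n : ℕ => 1/((x+1)+(n:ℝ))^2) :=
    Summable.of_nonneg_of_le hf_nonneg hf_le hgHS'.summable
  have htri : trigamma (x+1) = ∑' n : ℕ, 1/((x+1)+(n:ℝ))^2 := rfl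
  constructor
  · -- lower bound
    have hLHS : HasSum (fun n : ℕ => (Ub (x+n) - Ub ((x+n)+1)) - (Vb (x+n) - Vb ((x+n)+1)))
        (Ub x - Vb x) := hgHS'.sub hvHS'
    have hle : ∀ n : ℕ, (Ub (x+n) - Ub ((x+n)+1)) - (Vb (x+n) - Vb ((x+n)+1))
        ≤ 1/((x+1)+(n:ℝ))^2 := by
      intro n
      have := keyB (hxn n)
      rw [hcast2 n]
      linarith
    have hlt0 : (Ub (x+(0:ℕ)) - Ub ((x+(0:ℕ))+1)) - (Vb (x+(0:ℕ)) - Vb ((x+(0:ℕ))+1))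
        < 1/((x+1)+((0:ℕ):ℝ))^2 := by
      have := keyB (hxn 0)
      rw [hcast2 0]
      linarith
    have := Summable.tsum_lt_tsum hle hlt0 hLHS.summable hf_sum
    rw [hLHS.tsum_eq] at this
    rw [htri]
    have hU : Ub x = 1/x - 1/(2*x^2) + 1/(6*x^3) - 1/(30*x^5) + 1/(42*x^7) := rfl
    have hV : Vb x = 1/(30*x^9) := rfl
    linarith
  · -- upper bound
    have hlt0 : 1/((x+1)+((0:ℕ):ℝ))^2 < Ub (x+(0:ℕ)) - Ub ((x+(0:ℕ))+1) := hgpos 0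
    have := Summable.tsum_lt_tsum hf_le hlt0 hf_sum hgHS'.summable
    rw [hgHS'.tsum_eq] at this
    rw [htri]
    have hU : Ub x = 1/x - 1/(2*x^2) + 1/(6*x^3) - 1/(30*x^5) + 1/(42*x^7) := rfl
    linarith
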